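/- arXiv:2511.06845 — 2 statements merged into one kernel-verified Lean document; each statement's English description precedes it below -/
import Mathlib

section
/- For a mixed initial state ρ = Σ_μ p_μ |ψ_μ⟩⟨ψ_μ|, the success probability of the generalized Bernstein–Vazirani algorithm Σ_μ p_μ |⟨z| H^{⊗n} O_ℓ |ψ_μ⟩|² equals C_F(ρ) = ⟨η|ρ|η⟩. -/
open Matrix Complex BigOperators Finset

/-- For a mixed state ρ = ∑ p_μ |ψ_μ⟩⟨ψ_μ|, the GBV success
probability ∑ p_μ |⟨z|H^{⊗n}O_ℓ ψ_μ⟩|² equals C_F(ρ) = ⟨η|ρ|η⟩. -/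
theorem mixed_state_success_prob (n m : ℕ) (hn : 1 ≤ n) (z : Fin n → ZMod 2)
    (p : Fin m → ℝ) (hp : ∀ μ, 0 ≤ p μ) (hp1 : ∑ μ, p μ = 1)
    (ψ : Fin m → (Fin n → ZMod 2) → ℂ) (hψ : ∀ μ, ∑ x, ‖ψ μ x‖ ^ 2 = 1)
    (Hmat Omat : Matrix (Fin n → ZMod 2) (Fin n → ZMod 2) ℂ)
    (hH : Hmat = Matrix.of fun y x =>
      ((Real.sqrt (2 ^ n) : ℂ))⁻¹ * (-1) ^ ((∑ i, x i * y i : ZMod 2)).val)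
    (hO : Omat = Matrix.diagonal fun x => (-1 : ℂ) ^ ((∑ i, z i * x i : ZMod 2)).val)
    (ρ : Matrix (Fin n → ZMod 2) (Fin n → ZMod 2) ℂ)
    (hρ : ρ = ∑ μ, (p μ : ℂ) • Matrix.vecMulVec (ψ μ) (star (ψ μ)))
    (η : (Fin n → ZMod 2) → ℂ) (hη : η = fun _ => ((Real.sqrt (2 ^ n) : ℂ))⁻¹) :
    ∑ μ, p μ * ‖(Hmat * Omat).mulVec (ψ μ) z‖ ^ 2
      = (star η ⬝ᵥ ρ.mulVec η).re := by
  subst hH hO hρ hη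
  set c : ℂ := ((Real.sqrt (2 ^ n) : ℂ))⁻¹ with hc
  set S : Fin m → ℂ := fun μ => ∑ x, ψ μ x with hS
  have key : ∀ μ, ((Matrix.of fun y x : Fin n → ZMod 2 =>
      c * (-1) ^ ((∑ i, x i * y i : ZMod 2)).val) *
      Matrix.diagonal fun x : Fin n → ZMod 2 =>
        (-1 : ℂ) ^ ((∑ i, z i * x i : ZMod 2)).val).mulVec (ψ μ) z
      = c * S μ := by
    intro μ
    simp only [Matrix.mulVec, dotProduct, Matrix.mul_diagonal, Matrix.of_apply, hS,
      Finset.mul_sum]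
    refine Finset.sum_congr rfl fun x _ => ?_
    have hzx : (∑ i, x i * z i : ZMod 2) = ∑ i, z i * x i :=
      Finset.sum_congr rfl fun i _ => mul_comm _ _
    rw [hzx]
    have h1 : ((-1 : ℂ) ^ ((∑ i, z i * x i : ZMod 2)).val) *
        ((-1 : ℂ) ^ ((∑ i, z i * x i : ZMod 2)).val) = 1 := by
      rw [← pow_add, ← two_mul, pow_mul]
      norm_num
    calc c * (-1 : ℂ) ^ ((∑ i, z i * x i : ZMod 2)).val *
        (-1 : ℂ) ^ ((∑ i, z i * x i : ZMod 2)).val * ψ μ x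
        = ((-1 : ℂ) ^ ((∑ i, z i * x i : ZMod 2)).val *
          (-1 : ℂ) ^ ((∑ i, z i * x i : ZMod 2)).val) * (c * ψ μ x) := by ring
      _ = c * ψ μ x := by rw [h1, one_mul]
  have hcn : ‖c‖ = (Real.sqrt (2 ^ n))⁻¹ := by
    simp [hc]
  have hrhs : star (fun _ : Fin n → ZMod 2 => c) ⬝ᵥ
      (∑ μ, (p μ : ℂ) • Matrix.vecMulVec (ψ μ) (star (ψ μ))).mulVec (fun _ => c)
      = ∑ μ, (p μ : ℂ) * ((starRingEnd ℂ) c * c) * (S μ * (starRingEnd ℂ) (S μ)) := by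
    simp only [Matrix.mulVec, dotProduct, Matrix.sum_apply, Matrix.smul_apply,
      Matrix.vecMulVec_apply, Pi.star_apply, smul_eq_mul, Finset.mul_sum, Finset.sum_mul,
      hS, map_sum, Finset.sum_mul_sum, RCLike.star_def]
    rw [Finset.sum_comm]
    conv_lhs => enter [2, y]; rw [Finset.sum_comm]
    rw [Finset.sum_comm]
    exact Finset.sum_congr rfl fun μ _ => Finset.sum_congr rfl fun y _ =>
      Finset.sum_congr rfl fun x _ => by ring
  rw [hrhs, Complex.re_sum]
  refine Finset.sum_congr rfl fun μ _ => ?_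
  rw [key μ]
  have h1 : (starRingEnd ℂ) c * c = ((‖c‖ ^ 2 : ℝ) : ℂ) := by
    rw [mul_comm, Complex.mul_conj, Complex.normSq_eq_norm_sq]
  have h2 : S μ * (starRingEnd ℂ) (S μ) = ((‖S μ‖ ^ 2 : ℝ) : ℂ) := by
    rw [Complex.mul_conj, Complex.normSq_eq_norm_sq]
  rw [h1, h2]
  have h3 : ((p μ : ℂ) * ((‖c‖ ^ 2 : ℝ) : ℂ) * ((‖S μ‖ ^ 2 : ℝ) : ℂ)).re
      = p μ * (‖c‖ ^ 2 * ‖S μ‖ ^ 2) := by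
    rw [← Complex.ofReal_mul, ← Complex.ofReal_mul, Complex.ofReal_re]
    ring
  rw [h3, norm_mul, mul_pow]
end

section
/- For a unitary U on C^N, the operator coherence fraction with respect to |0^n⟩, C_F(U|0^n⟩⟨0^n|U†), equals the success probability |⟨z| H^{⊗n} O_ℓ U |0^n⟩|² of the generalized Bernstein–Vazirani algorithm with initializing unitary U. -/
open Matrix Complex BigOperators Finset

lemma vecMulVec_mulVec' {m α : Type*} [Fintype m] [CommRing α]
    (a b v : m → α) : (Matrix.vecMulVec a b).mulVec v = (b ⬝ᵥ v) • a := by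
  funext i
  simp [Matrix.vecMulVec_apply, Matrix.mulVec, dotProduct, Finset.mul_sum, mul_assoc,
    mul_comm, mul_left_comm]

/-- The operator coherence fraction of U w.r.t. |0^n⟩,
C_F(U|0^n⟩⟨0^n|U†), equals the GBV success probability |⟨z|H^{⊗n}O_ℓ U|0^n⟩|². -/
theorem operator_coherence_fraction_eq_success (n : ℕ) (hn : 1 ≤ n)
    (z : Fin n → ZMod 2)
    (U Hmat Omat : Matrix (Fin n → ZMod 2) (Fin n → ZMod 2) ℂ)
    (hU : U ∈ Matrix.unitaryGroup (Fin n → ZMod 2) ℂ)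
    (hH : Hmat = Matrix.of fun y x =>
      ((Real.sqrt (2 ^ n) : ℂ))⁻¹ * (-1) ^ ((∑ i, x i * y i : ZMod 2)).val)
    (hO : Omat = Matrix.diagonal fun x => (-1 : ℂ) ^ ((∑ i, z i * x i : ZMod 2)).val)
    (η e0 : (Fin n → ZMod 2) → ℂ)
    (hη : η = fun _ => ((Real.sqrt (2 ^ n) : ℂ))⁻¹)
    (he0 : e0 = Pi.single 0 1) :
    star η ⬝ᵥ (U * Matrix.vecMulVec e0 (star e0) * Uᴴ).mulVec η
      = ((‖(Hmat * Omat * U).mulVec e0 z‖ ^ 2 : ℝ) : ℂ) := by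
  set s : ℂ := star η ⬝ᵥ U.mulVec e0 with hs
  have hconj : star e0 ⬝ᵥ Uᴴ.mulVec η = star s := by
    rw [hs]
    simp only [dotProduct, Matrix.mulVec, Matrix.conjTranspose_apply, star_sum, star_mul',
      Pi.star_apply, dotProduct, Finset.mul_sum, star_star]
    rw [Finset.sum_comm]
    refine Finset.sum_congr rfl fun x _ => Finset.sum_congr rfl fun y _ => ?_
    subst hη he0
    simp [Pi.single_apply, apply_ite (star : ℂ → ℂ)]
    ring
  have hLHS : star η ⬝ᵥ (U * Matrix.vecMulVec e0 (star e0) * Uᴴ).mulVec η = star s * s := by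
    rw [← Matrix.mulVec_mulVec, ← Matrix.mulVec_mulVec, vecMulVec_mulVec', hconj,
      Matrix.mulVec_smul, dotProduct_smul, smul_eq_mul, mul_comm]
  have hrow : ∀ y, (Hmat * Omat) z y = ((Real.sqrt (2 ^ n) : ℂ))⁻¹ := by
    intro y
    rw [hH, hO, Matrix.mul_diagonal]
    have hcomm : (∑ i, z i * y i : ZMod 2) = (∑ i, y i * z i : ZMod 2) :=
      Finset.sum_congr rfl fun i _ => mul_comm _ _
    simp only [Matrix.of_apply]
    rw [hcomm, mul_assoc, ← pow_add, ← two_mul, pow_mul]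
    simp
  have hamp : (Hmat * Omat * U).mulVec e0 z = s := by
    rw [← Matrix.mulVec_mulVec, hs]
    simp only [Matrix.mulVec, dotProduct]
    refine Finset.sum_congr rfl fun y _ => ?_
    rw [hrow y, hη]
    simp [star_inv₀]
  rw [hLHS, hamp]
  simp [Complex.star_def, ← Complex.normSq_eq_conj_mul_self, Complex.normSq_eq_norm_sq]
end
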